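/- arXiv:2008.07681 — 3 statements merged into one kernel-verified Lean document; each statement's English description precedes it below -/
import Mathlib

section
/- Let w : ℕ → (0,∞) be nondecreasing, 1 < p < ∞, a := 1/(p−1), and for s ∈ [0,1] set p_s := p/(1 + s(p−1)). Then for all 0 ≤ r < s ≤ 1 and all x ∈ ℓ^{p_s}(w): ‖x‖_{ℓ^{p_r}(w)} ≤ ‖x‖_{ℓ^{p_s}(w)}^{(a+r)/(a+s)} · ‖x‖_{ℓ^∞(w)}^{(s−r)/(a+s)}. -/
/-- For a nondecreasing weight `w`, `1 < p < ∞`, `a := 1/(p−1)`,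
`p_s := p/(1 + s(p−1))`, and `0 ≤ r < s ≤ 1`, every `x ∈ ℓ^{p_s}(w)` satisfies
`‖x‖_{ℓ^{p_r}(w)} ≤ ‖x‖_{ℓ^{p_s}(w)}^{(a+r)/(a+s)} ‖x‖_{ℓ^∞(w)}^{(s−r)/(a+s)}`.
Note `1/p_s = (1+s(p−1))/p`. -/
theorem stmt7 (w : ℕ → ℝ) (hw : ∀ n, 0 < w n) (hmono : Monotone w)
    (p : ℝ) (hp : 1 < p) (r s : ℝ) (hr : 0 ≤ r) (hrs : r < s) (hs : s ≤ 1)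
    (x : ℕ → ℝ)
    (hx : Summable fun n =>
      w n ^ (1 - p / (1 + s * (p - 1))) * |x n| ^ (p / (1 + s * (p - 1)))) :
    (∑' n, w n ^ (1 - p / (1 + r * (p - 1))) * |x n| ^ (p / (1 + r * (p - 1)))) ^
        ((1 + r * (p - 1)) / p) ≤
      ((∑' n, w n ^ (1 - p / (1 + s * (p - 1))) * |x n| ^ (p / (1 + s * (p - 1)))) ^
          ((1 + s * (p - 1)) / p)) ^ ((1 / (p - 1) + r) / (1 / (p - 1) + s)) *
        (⨆ n, (w n)⁻¹ * |x n|) ^ ((s - r) / (1 / (p - 1) + s)) := by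
  have hp0 : (0:ℝ) < p := by linarith
  have hp1 : (0:ℝ) < p - 1 := by linarith
  set Ar := 1 + r * (p - 1) with hAr
  set As := 1 + s * (p - 1) with hAs
  have hAr0 : 0 < Ar := by nlinarith
  have hAs0 : 0 < As := by nlinarith
  have hArAs : Ar < As := by nlinarith
  set qr := p / Ar with hqr
  set qs := p / As with hqs
  have hqr0 : 0 < qr := div_pos hp0 hAr0
  have hqs0 : 0 < qs := div_pos hp0 hAs0
  have hqsr : qs < qr := div_lt_div_of_pos_left hp0 hAr0 hArAs
  set d := qr - qs with hd
  have hd0 : 0 < d := by simp only [hd]; linarith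
  -- the sup is over a bounded set
  have hterm_nonneg : ∀ n, 0 ≤ w n ^ (1 - qs) * |x n| ^ qs := fun n =>
    mul_nonneg (Real.rpow_nonneg (hw n).le _) (Real.rpow_nonneg (abs_nonneg _) _)
  have hbdd : BddAbove (Set.range fun n => (w n)⁻¹ * |x n|) := by
    obtain ⟨C, hC⟩ := (hx.tendsto_atTop_zero.bddAbove_range)
    simp only [upperBounds, Set.mem_range, forall_exists_index] at hC
    have hC' : ∀ n, w n ^ (1 - qs) * |x n| ^ qs ≤ C := fun n => hC n rfl
    have hC0 : 0 ≤ C := le_trans (hterm_nonneg 0) (hC' 0)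
    refine ⟨((w 0)⁻¹ * C) ^ (1/qs), ?_⟩
    rintro y ⟨n, rfl⟩
    have hkey : ((w n)⁻¹ * |x n|) ^ qs ≤ (w 0)⁻¹ * C := by
      have h1 : ((w n)⁻¹ * |x n|) ^ qs = (w n)⁻¹ * (w n ^ (1 - qs) * |x n| ^ qs) := by
        rw [Real.mul_rpow (inv_nonneg.mpr (hw n).le) (abs_nonneg _),
          Real.inv_rpow (hw n).le, ← Real.rpow_neg (hw n).le,
          ← Real.rpow_neg_one (w n), ← mul_assoc, ← Real.rpow_add (hw n)]
        congr 2
        ring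
      rw [h1]
      have hw0n : (w n)⁻¹ ≤ (w 0)⁻¹ :=
        inv_anti₀ (hw 0) (hmono (Nat.zero_le n))
      calc (w n)⁻¹ * (w n ^ (1 - qs) * |x n| ^ qs)
          ≤ (w n)⁻¹ * C := by
            exact mul_le_mul_of_nonneg_left (hC' n) (inv_nonneg.mpr (hw n).le)
        _ ≤ (w 0)⁻¹ * C := mul_le_mul_of_nonneg_right hw0n hC0
    have := Real.rpow_le_rpow (Real.rpow_nonneg
      (mul_nonneg (inv_nonneg.mpr (hw n).le) (abs_nonneg _)) qs) hkey
      (le_of_lt (by positivity : (0:ℝ) < 1/qs))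
    rwa [← Real.rpow_mul (mul_nonneg (inv_nonneg.mpr (hw n).le) (abs_nonneg _)),
      mul_one_div, div_self hqs0.ne', Real.rpow_one] at this
  set M := ⨆ n, (w n)⁻¹ * |x n| with hM
  have hle : ∀ n, (w n)⁻¹ * |x n| ≤ M := fun n => le_ciSup hbdd n
  have hM0 : 0 ≤ M :=
    le_trans (mul_nonneg (inv_nonneg.mpr (hw 0).le) (abs_nonneg _)) (hle 0)
  -- termwise bound
  have hterm : ∀ n, w n ^ (1 - qr) * |x n| ^ qr ≤ (w n ^ (1 - qs) * |x n| ^ qs) * M ^ d := by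
    intro n
    have heq : w n ^ (1 - qr) * |x n| ^ qr
        = (w n ^ (1 - qs) * |x n| ^ qs) * ((w n)⁻¹ * |x n|) ^ d := by
      rw [Real.mul_rpow (inv_nonneg.mpr (hw n).le) (abs_nonneg _),
        Real.inv_rpow (hw n).le]
      have h1 : |x n| ^ qs * |x n| ^ d = |x n| ^ qr := by
        rw [← Real.rpow_add' (abs_nonneg _)]
        · congr 1; simp [hd]
        · simp only [hd]; linarith
      have h2 : w n ^ (1 - qs) * (w n ^ d)⁻¹ = w n ^ (1 - qr) := by
        rw [← Real.rpow_neg (hw n).le, ← Real.rpow_add (hw n)]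
        congr 1; simp only [hd]; ring
      calc w n ^ (1 - qr) * |x n| ^ qr
          = (w n ^ (1 - qs) * (w n ^ d)⁻¹) * (|x n| ^ qs * |x n| ^ d) := by
            rw [h1, h2]
        _ = w n ^ (1 - qs) * |x n| ^ qs * ((w n ^ d)⁻¹ * |x n| ^ d) := by ring
    rw [heq]
    exact mul_le_mul_of_nonneg_left
      (Real.rpow_le_rpow (mul_nonneg (inv_nonneg.mpr (hw n).le) (abs_nonneg _))
        (hle n) hd0.le) (hterm_nonneg n)
  -- summability of r-terms and sum comparison
  have hsumm_r : Summable (fun n => w n ^ (1 - qr) * |x n| ^ qr) := by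
    refine Summable.of_nonneg_of_le (fun n =>
      mul_nonneg (Real.rpow_nonneg (hw n).le _) (Real.rpow_nonneg (abs_nonneg _) _))
      hterm ?_
    exact hx.mul_right _
  have hsum_le : (∑' n, w n ^ (1 - qr) * |x n| ^ qr)
      ≤ (∑' n, w n ^ (1 - qs) * |x n| ^ qs) * M ^ d := by
    rw [← tsum_mul_right]
    exact Summable.tsum_le_tsum hterm hsumm_r (hx.mul_right _)
  set Sr := ∑' n, w n ^ (1 - qr) * |x n| ^ qr with hSr
  set Ss := ∑' n, w n ^ (1 - qs) * |x n| ^ qs with hSs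
  have hSr0 : 0 ≤ Sr := tsum_nonneg fun n =>
    mul_nonneg (Real.rpow_nonneg (hw n).le _) (Real.rpow_nonneg (abs_nonneg _) _)
  have hSs0 : 0 ≤ Ss := tsum_nonneg hterm_nonneg
  have key : Sr ^ (Ar / p) ≤ Ss ^ (Ar / p) * M ^ (d * (Ar / p)) := by
    calc Sr ^ (Ar / p) ≤ (Ss * M ^ d) ^ (Ar / p) :=
          Real.rpow_le_rpow hSr0 hsum_le (by positivity)
      _ = Ss ^ (Ar / p) * M ^ (d * (Ar / p)) := by
          rw [Real.mul_rpow hSs0 (Real.rpow_nonneg hM0 d), ← Real.rpow_mul hM0]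
  have hpe1 : As / p * ((1 / (p - 1) + r) / (1 / (p - 1) + s)) = Ar / p := by
    have h1 : 1 / (p - 1) + s ≠ 0 := (add_pos (one_div_pos.mpr hp1) (hr.trans_lt hrs)).ne'
    have h2 : 1 + s * (p - 1) ≠ 0 := hAs0.ne'
    have h3 : p - 1 ≠ 0 := hp1.ne'
    rw [hAr, hAs]
    field_simp
  have hpe2 : d * (Ar / p) = (s - r) / (1 / (p - 1) + s) := by
    have h1 : (1:ℝ) / (p - 1) + s > 0 := add_pos (one_div_pos.mpr hp1) (hr.trans_lt hrs)
    have h2 : 1 + s * (p - 1) ≠ 0 := hAs0.ne'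
    have h3 : p - 1 ≠ 0 := hp1.ne'
    have h4 : 1 + r * (p - 1) ≠ 0 := hAr0.ne'
    rw [hd, hqr, hqs, hAr, hAs]
    field_simp
    have h5 : (1 + p * s - s) ≠ 0 := by linarith [hAs0, hAs]
    linear_combination -(mul_inv_cancel₀ h5)
  calc Sr ^ (Ar / p) ≤ Ss ^ (Ar / p) * M ^ (d * (Ar / p)) := key
    _ = (Ss ^ (As / p)) ^ ((1 / (p - 1) + r) / (1 / (p - 1) + s))
        * M ^ ((s - r) / (1 / (p - 1) + s)) := by
        rw [← Real.rpow_mul hSs0, hpe1, hpe2]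
end

section
/- Let w : ℕ → (0,∞) be nondecreasing and f : [0,∞) → [0,1] be decreasing with f(0)=1 satisfying the growth condition ∑_n w(n) f(τ w(n)) ≤ C_w τ⁻¹ for all τ ∈ (0, τ₀]. Let 1 < p < ∞, a := 1/(p−1), s ∈ (0,1), p_s := p/(1+s(p−1)), and define (P_t x)(n) := f(t^{a+1} w(n)) x(n). Then for all 0 < t ≤ τ₀^{1/(a+1)} and x ∈ ℓ^{p_s}(w): ‖P_t x‖_{ℓ¹} ≤ C_w^{(1−s)/(a+1)} t^{s−1} ‖x‖_{ℓ^{p_s}(w)}. -/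
/-- weighted `ℓ¹`-bound for the smoothing operators
`(P_t x)(n) = f(t^{a+1} w(n)) x(n)`: for `0 < t ≤ τ₀^{1/(a+1)}` and `x ∈ ℓ^{p_s}(w)`,
`‖P_t x‖_{ℓ¹} ≤ C_w^{(1−s)/(a+1)} t^{s−1} ‖x‖_{ℓ^{p_s}(w)}`, where `a = 1/(p−1)`,
`p_s = p/(1+s(p−1))`, given the growth condition `∑_n w(n) f(τ w(n)) ≤ C_w τ⁻¹` on `(0,τ₀]`. -/
theorem stmt9 (w : ℕ → ℝ) (hw : ∀ n, 0 < w n) (hmono : Monotone w)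
    (f : ℝ → ℝ) (hrange : ∀ τ ∈ Set.Ici (0 : ℝ), f τ ∈ Set.Icc (0 : ℝ) 1)
    (hanti : AntitoneOn f (Set.Ici 0)) (hf0 : f 0 = 1)
    (τ₀ C_w : ℝ) (hτ₀ : 0 < τ₀) (hCw : 0 < C_w)
    (hgrowth : ∀ τ : ℝ, 0 < τ → τ ≤ τ₀ →
      Summable (fun n => w n * f (τ * w n)) ∧ ∑' n, w n * f (τ * w n) ≤ C_w * τ⁻¹)
    (p : ℝ) (hp : 1 < p) (s : ℝ) (hs : s ∈ Set.Ioo (0 : ℝ) 1)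
    (t : ℝ) (ht : 0 < t) (ht0 : t ≤ τ₀ ^ (1 / (1 / (p - 1) + 1)))
    (x : ℕ → ℝ)
    (hx : Summable fun n =>
      w n ^ (1 - p / (1 + s * (p - 1))) * |x n| ^ (p / (1 + s * (p - 1)))) :
    ∑' n, |f (t ^ (1 / (p - 1) + 1) * w n) * x n| ≤
      C_w ^ ((1 - s) / (1 / (p - 1) + 1)) * t ^ (s - 1) *
        (∑' n, w n ^ (1 - p / (1 + s * (p - 1))) * |x n| ^ (p / (1 + s * (p - 1)))) ^
          ((1 + s * (p - 1)) / p) := by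
  obtain ⟨hs0, hs1⟩ := hs
  have hp1 : (0:ℝ) < p - 1 := by linarith
  have hp0 : (0:ℝ) < p := by linarith
  set a1 : ℝ := 1 / (p - 1) + 1 with ha1
  have ha1pos : 0 < a1 := by positivity
  have ha1eq : a1 = p / (p - 1) := by field_simp [ha1]; rw [ha1]; field_simp; ring
  set ps : ℝ := p / (1 + s * (p - 1)) with hps
  have hden : (0:ℝ) < 1 + s * (p - 1) := by nlinarith
  have hps1 : 1 < ps := by
    rw [hps, lt_div_iff₀ hden]; nlinarith
  have hpspos : 0 < ps := lt_trans one_pos hps1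
  set qs : ℝ := ps / (ps - 1) with hqs
  have hconj : ps.HolderConjugate qs := by
    exact (Real.holderConjugate_iff_eq_conjExponent hps1).2 hqs
  have hqspos : 0 < qs := hconj.symm.pos
  have hqs1 : 1 ≤ qs := hconj.symm.lt.le
  have hinvqs : qs⁻¹ = (1 - s) / a1 := by
    have h1 : qs⁻¹ = 1 - ps⁻¹ := by
      have := hconj.inv_add_inv_eq_one; linarith
    rw [h1, ha1eq, hps]
    field_simp
    ring
  set τ : ℝ := t ^ a1 with hτ
  have hτpos : 0 < τ := Real.rpow_pos_of_pos ht a1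
  have hτle : τ ≤ τ₀ := by
    have : t ^ a1 ≤ (τ₀ ^ (1 / a1)) ^ a1 := Real.rpow_le_rpow ht.le ht0 ha1pos.le
    rwa [← Real.rpow_mul hτ₀.le, one_div, inv_mul_cancel₀ ha1pos.ne', Real.rpow_one] at this
  obtain ⟨hgsum, hgle⟩ := hgrowth τ hτpos hτle
  have hfτ : ∀ n, f (τ * w n) ∈ Set.Icc (0:ℝ) 1 := fun n =>
    hrange _ (mul_nonneg hτpos.le (hw n).le)
  set F : ℕ → ℝ := fun n => w n ^ ((1 - ps) / ps) * |x n| with hF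
  set G : ℕ → ℝ := fun n => w n ^ (qs⁻¹) * f (τ * w n) with hG
  have hFnn : ∀ n, 0 ≤ F n := fun n =>
    mul_nonneg (Real.rpow_nonneg (hw n).le _) (abs_nonneg _)
  have hGnn : ∀ n, 0 ≤ G n := fun n =>
    mul_nonneg (Real.rpow_nonneg (hw n).le _) (hfτ n).1
  have hFps : ∀ n, F n ^ ps = w n ^ (1 - ps) * |x n| ^ ps := by
    intro n
    rw [hF, Real.mul_rpow (Real.rpow_nonneg (hw n).le _) (abs_nonneg _),
      ← Real.rpow_mul (hw n).le]
    congr 2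
    field_simp
  have hGqs_le : ∀ n, G n ^ qs ≤ w n * f (τ * w n) := by
    intro n
    rw [hG, Real.mul_rpow (Real.rpow_nonneg (hw n).le _) (hfτ n).1,
      ← Real.rpow_mul (hw n).le, inv_mul_cancel₀ hqspos.ne', Real.rpow_one]
    refine mul_le_mul_of_nonneg_left ?_ (hw n).le
    rcases eq_or_lt_of_le (hfτ n).1 with h0 | h0
    · rw [← h0, Real.zero_rpow hqspos.ne']
    · calc f (τ * w n) ^ qs ≤ f (τ * w n) ^ (1:ℝ) :=
            Real.rpow_le_rpow_of_exponent_ge h0 (hfτ n).2 hqs1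
        _ = f (τ * w n) := Real.rpow_one _
  have hGqs_nn : ∀ n, 0 ≤ G n ^ qs := fun n => Real.rpow_nonneg (hGnn n) _
  have hFsum : Summable (fun n => F n ^ ps) := by
    simp_rw [hFps]; exact hx
  have hGsum : Summable (fun n => G n ^ qs) :=
    Summable.of_nonneg_of_le hGqs_nn hGqs_le hgsum
  have hG_tsum_le : ∑' n, G n ^ qs ≤ C_w * τ⁻¹ :=
    le_trans (Summable.tsum_le_tsum hGqs_le hGsum hgsum) hgle
  have hFG : ∀ n, |f (τ * w n) * x n| = F n * G n := by
    intro n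
    rw [abs_mul, abs_of_nonneg (hfτ n).1, hF, hG]
    rw [mul_mul_mul_comm, ← Real.rpow_add (hw n)]
    have he : (1 - ps) / ps + qs⁻¹ = 0 := by
      have h1 : qs⁻¹ = 1 - ps⁻¹ := by
        have := hconj.inv_add_inv_eq_one; linarith
      rw [h1]; field_simp; ring
    rw [he, Real.rpow_zero, one_mul, mul_comm]
  have hHolder := Real.inner_le_Lp_mul_Lq_tsum_of_nonneg hconj hFnn hGnn hFsum hGsum
  calc ∑' n, |f (τ * w n) * x n| = ∑' n, F n * G n := by simp_rw [hFG]
    _ ≤ (∑' n, F n ^ ps) ^ (1 / ps) * (∑' n, G n ^ qs) ^ (1 / qs) := hHolder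
    _ ≤ (∑' n, F n ^ ps) ^ (1 / ps) * (C_w * τ⁻¹) ^ (1 / qs) := by
        refine mul_le_mul_of_nonneg_left ?_ (Real.rpow_nonneg (tsum_nonneg
          (fun n => Real.rpow_nonneg (hFnn n) _)) _)
        exact Real.rpow_le_rpow (tsum_nonneg hGqs_nn) hG_tsum_le hconj.symm.one_div_nonneg
    _ = C_w ^ ((1 - s) / a1) * t ^ (s - 1) *
          (∑' n, w n ^ (1 - ps) * |x n| ^ ps) ^ ((1 + s * (p - 1)) / p) := by
        have h1 : (C_w * τ⁻¹) ^ (1 / qs) = C_w ^ ((1 - s) / a1) * t ^ (s - 1) := by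
          rw [Real.mul_rpow hCw.le (inv_nonneg.2 hτpos.le), one_div, hinvqs]
          congr 1
          rw [hτ, ← Real.rpow_neg ht.le, ← Real.rpow_mul ht.le]
          congr 1
          field_simp
          ring
        have h2 : (1:ℝ) / ps = (1 + s * (p - 1)) / p := by
          rw [hps]; field_simp
        rw [h1, h2]
        simp_rw [hFps]
        ring
end

section
/- Under the same hypotheses, for each s ∈ (0,1) there is a constant C*(s) > 0 such that the operators (P_t x)(n) := f(t^{a+1} w(n)) x(n) satisfy ‖(id − P_t)x‖_{ℓ^∞(w)} ≤ C*(s) t^{a+s} ‖x‖_{ℓ^{p_s}(w)} for all t > 0 and x ∈ ℓ^{p_s}(w). -/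
private lemma stmt10_aux (f : ℝ → ℝ) (hf : ContDiffOn ℝ 1 f (Set.Ici 0)) (hf0 : f 0 = 1) :
    ∃ M : ℝ, 0 ≤ M ∧ ∀ u ∈ Set.Icc (0:ℝ) 1, 1 - f u ≤ M * u := by
  have hU : UniqueDiffOn ℝ (Set.Ici (0:ℝ)) := uniqueDiffOn_Ici 0
  have hcont : ContinuousOn (derivWithin f (Set.Ici 0)) (Set.Ici 0) :=
    hf.continuousOn_derivWithin hU le_rfl
  obtain ⟨M, hM⟩ := (isCompact_Icc (a := (0:ℝ)) (b := 1)).exists_bound_of_continuousOn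
    (hcont.mono (Set.Icc_subset_Ici_self))
  refine ⟨max M 0, le_max_right _ _, fun u hu => ?_⟩
  have hderiv : ∀ v ∈ Set.Icc (0:ℝ) 1,
      HasDerivWithinAt f (derivWithin f (Set.Ici 0) v) (Set.Icc 0 1) v := by
    intro v hv
    exact ((hf.differentiableOn one_ne_zero v (Set.Icc_subset_Ici_self hv)).hasDerivWithinAt).mono
      Set.Icc_subset_Ici_self
  have key := Convex.norm_image_sub_le_of_norm_hasDerivWithin_le (C := max M 0) hderiv
    (fun v hv => le_trans (hM v (by exact hv)) (le_max_left _ _)) (convex_Icc 0 1)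
    (Set.left_mem_Icc.2 zero_le_one) hu
  rw [hf0] at key
  calc 1 - f u ≤ |f u - 1| := by rw [abs_sub_comm]; exact le_abs_self _
    _ ≤ max M 0 * u := by
        rw [Real.norm_eq_abs, Real.norm_eq_abs] at key
        rwa [sub_zero, abs_of_nonneg hu.1] at key

/-- For each `s ∈ (0,1)` there is `C*(s) > 0` such that the operators
`(P_t x)(n) := f(t^{a+1} w(n)) x(n)` satisfy
`‖(id − P_t)x‖_{ℓ^∞(w)} ≤ C*(s) t^{a+s} ‖x‖_{ℓ^{p_s}(w)}` for all `t > 0` and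
`x ∈ ℓ^{p_s}(w)`, where `a = 1/(p−1)` and `p_s = p/(1+s(p−1))`. -/
theorem stmt10 (w : ℕ → ℝ) (hw : ∀ n, 0 < w n) (hmono : Monotone w)
    (f : ℝ → ℝ) (hf : ContDiffOn ℝ 1 f (Set.Ici 0))
    (hpos : ∀ τ ∈ Set.Ici (0 : ℝ), 0 ≤ f τ) (hanti : AntitoneOn f (Set.Ici 0))
    (hf0 : f 0 = 1)
    (p : ℝ) (hp : 1 < p) (s : ℝ) (hs : s ∈ Set.Ioo (0 : ℝ) 1) :
    ∃ C : ℝ, 0 < C ∧ ∀ t : ℝ, 0 < t → ∀ x : ℕ → ℝ,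
      (Summable fun n =>
        w n ^ (1 - p / (1 + s * (p - 1))) * |x n| ^ (p / (1 + s * (p - 1)))) →
      ⨆ n, (w n)⁻¹ * |x n - f (t ^ (1 / (p - 1) + 1) * w n) * x n| ≤
        C * t ^ (1 / (p - 1) + s) *
          (∑' n, w n ^ (1 - p / (1 + s * (p - 1))) * |x n| ^ (p / (1 + s * (p - 1)))) ^
            ((1 + s * (p - 1)) / p) := by
  obtain ⟨M, hM0, hM⟩ := stmt10_aux f hf hf0
  have hp1 : (0:ℝ) < p - 1 := by linarith
  have hd : (0:ℝ) < 1 + s * (p - 1) := by nlinarith [hs.1, hs.2]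
  set q : ℝ := p / (1 + s * (p - 1)) with hqdef
  have hq0 : 0 < q := div_pos (by linarith) hd
  have hq1 : 1 ≤ q := by
    rw [hqdef, le_div_iff₀ hd]; nlinarith [hs.2, hp1]
  -- key pointwise bound on f
  have hkey : ∀ τ : ℝ, 0 < τ → 1 - f (τ ^ q) ≤ (M + 1) * τ := by
    intro τ hτ
    rcases le_or_gt τ 1 with h1 | h1
    · have hτq1 : τ ^ q ≤ 1 := Real.rpow_le_one hτ.le h1 (by linarith)
      have hτq0 : (0:ℝ) ≤ τ ^ q := Real.rpow_nonneg hτ.le q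
      have h2 : τ ^ q ≤ τ := by
        calc τ ^ q ≤ τ ^ (1:ℝ) := Real.rpow_le_rpow_of_exponent_ge hτ h1 hq1
        _ = τ := Real.rpow_one τ
      calc 1 - f (τ ^ q) ≤ M * (τ ^ q) := hM _ ⟨hτq0, hτq1⟩
        _ ≤ M * τ := by nlinarith
        _ ≤ (M + 1) * τ := by nlinarith
    · have hfτ : 0 ≤ f (τ ^ q) := hpos _ (Real.rpow_nonneg hτ.le q)
      nlinarith
  refine ⟨M + 1, by linarith, fun t ht x hx => ?_⟩
  set S : ℝ := ∑' n, w n ^ (1 - q) * |x n| ^ q with hSdef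
  have hS0 : 0 ≤ S :=
    tsum_nonneg fun n => mul_nonneg (Real.rpow_nonneg (hw n).le _)
      (Real.rpow_nonneg (abs_nonneg _) _)
  have hexp : (1 + s * (p - 1)) / p = q⁻¹ := by
    rw [hqdef, inv_div]
  rw [hexp]
  apply ciSup_le
  intro n
  -- abbreviations
  set T : ℝ := t ^ (1 / (p - 1) + 1) * w n with hTdef
  have hT0 : 0 ≤ T := mul_nonneg (Real.rpow_nonneg ht.le _) (hw n).le
  have hfT1 : f T ≤ 1 := by
    have := hanti (Set.mem_Ici.2 (le_refl (0:ℝ))) hT0 hT0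
    rwa [hf0] at this
  set τ : ℝ := t ^ (1 / (p - 1) + s) * (w n) ^ q⁻¹ with hτdef
  have hτpos : 0 < τ :=
    mul_pos (Real.rpow_pos_of_pos ht _) (Real.rpow_pos_of_pos (hw n) _)
  have hτq : τ ^ q = T := by
    rw [hτdef, Real.mul_rpow (Real.rpow_nonneg ht.le _) (Real.rpow_nonneg (hw n).le _),
      ← Real.rpow_mul ht.le, ← Real.rpow_mul (hw n).le, inv_mul_cancel₀ hq0.ne',
      Real.rpow_one, hTdef,
      show (1 / (p - 1) + s) * q = 1 / (p - 1) + 1 by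
        rw [hqdef, div_add_one hp1.ne', div_add' _ _ _ hp1.ne', div_mul_div_comm,
          mul_comm (1 + s * (p - 1)) p, mul_div_mul_right _ _ hd.ne']; congr 1; ring]
  have h1fT : 1 - f T ≤ (M + 1) * τ := by
    rw [← hτq]; exact hkey τ hτpos
  -- term bound from the sum
  have hterm : w n ^ (1 - q) * |x n| ^ q ≤ S :=
    hx.le_tsum n fun m _ => mul_nonneg (Real.rpow_nonneg (hw m).le _)
      (Real.rpow_nonneg (abs_nonneg _) _)
  have hterm' : w n ^ (q⁻¹ - 1) * |x n| ≤ S ^ q⁻¹ := by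
    have h := Real.rpow_le_rpow
      (mul_nonneg (Real.rpow_nonneg (hw n).le _) (Real.rpow_nonneg (abs_nonneg _) _))
      hterm (inv_nonneg.2 hq0.le)
    rwa [Real.mul_rpow (Real.rpow_nonneg (hw n).le _) (Real.rpow_nonneg (abs_nonneg _) _),
      ← Real.rpow_mul (hw n).le, ← Real.rpow_mul (abs_nonneg _),
      mul_inv_cancel₀ hq0.ne', Real.rpow_one,
      show (1 - q) * q⁻¹ = q⁻¹ - 1 by field_simp] at h
  -- main chain
  have habs : |x n - f T * x n| = (1 - f T) * |x n| := by
    rw [show x n - f T * x n = (1 - f T) * x n by ring, abs_mul,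
      abs_of_nonneg (by linarith : (0:ℝ) ≤ 1 - f T)]
  rw [habs]
  have hwin : (0:ℝ) ≤ (w n)⁻¹ * |x n| := mul_nonneg (inv_nonneg.2 (hw n).le) (abs_nonneg _)
  calc (w n)⁻¹ * ((1 - f T) * |x n|)
      = (1 - f T) * ((w n)⁻¹ * |x n|) := by ring
    _ ≤ ((M + 1) * τ) * ((w n)⁻¹ * |x n|) := mul_le_mul_of_nonneg_right h1fT hwin
    _ = (M + 1) * t ^ (1 / (p - 1) + s) * (w n ^ (q⁻¹ - 1) * |x n|) := by
        rw [hτdef]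
        rw [show (w n) ^ (q⁻¹ - 1) = (w n) ^ q⁻¹ * (w n)⁻¹ by
          rw [sub_eq_add_neg, Real.rpow_add (hw n), Real.rpow_neg_one]]
        ring
    _ ≤ (M + 1) * t ^ (1 / (p - 1) + s) * S ^ q⁻¹ := by
        apply mul_le_mul_of_nonneg_left hterm'
        exact mul_nonneg (by linarith) (Real.rpow_nonneg ht.le _)
end
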